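/- Let X₁, X₂ be real n×K matrices, Q a symmetric K×K matrix, λ₁, λ₂ > 0, and suppose Λⱼ = XⱼᵀXⱼ + λⱼQ is invertible for j = 1, 2; set Sⱼ = XⱼΛⱼ⁻¹Xⱼᵀ. Fix y ∈ ℝⁿ and b₂⁽⁰⁾ ∈ ℝᴷ, and define the backfitting iterates b₁⁽ℓ⁾ = Λ₁⁻¹X₁ᵀ(y − X₂b₂⁽ℓ⁻¹⁾), b₂⁽ℓ⁾ = Λ₂⁻¹X₂ᵀ(y − X₁b₁⁽ℓ⁾) for ℓ ≥ 1. Then for every ℓ ≥ 1, b₂⁽ℓ⁾ = Λ₂⁻¹X₂ᵀ (Σ_{j=0}^{ℓ−1} (S₁S₂)^j (Iₙ − S₁)) y + Λ₂⁻¹X₂ᵀ(S₁S₂)^{ℓ−1}S₁X₂ b₂⁽⁰⁾, where Iₙ is the n×n identity matrix. -/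
import Mathlib


open Matrix

/-- Closed form of the second-component backfitting iterate in the bivariate
penalized additive B-spline model. -/
theorem backfitting_closed_form
    (n K : ℕ)
    (X₁ X₂ : Matrix (Fin n) (Fin K) ℝ) (Q : Matrix (Fin K) (Fin K) ℝ)
    (hQ : Q.IsSymm) (l₁ l₂ : ℝ) (hl₁ : 0 < l₁) (hl₂ : 0 < l₂)
    (Λ₁ Λ₂ : Matrix (Fin K) (Fin K) ℝ)
    (hΛ₁ : Λ₁ = X₁ᵀ * X₁ + l₁ • Q) (hΛ₂ : Λ₂ = X₂ᵀ * X₂ + l₂ • Q)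
    (hΛ₁inv : IsUnit Λ₁) (hΛ₂inv : IsUnit Λ₂)
    (S₁ S₂ : Matrix (Fin n) (Fin n) ℝ)
    (hS₁ : S₁ = X₁ * Λ₁⁻¹ * X₁ᵀ) (hS₂ : S₂ = X₂ * Λ₂⁻¹ * X₂ᵀ)
    (y : Fin n → ℝ)
    (b₁ b₂ : ℕ → (Fin K → ℝ))
    (hrec₁ : ∀ ℓ, b₁ (ℓ + 1) = Λ₁⁻¹ *ᵥ (X₁ᵀ *ᵥ (y - X₂ *ᵥ b₂ ℓ)))
    (hrec₂ : ∀ ℓ, b₂ (ℓ + 1) = Λ₂⁻¹ *ᵥ (X₂ᵀ *ᵥ (y - X₁ *ᵥ b₁ (ℓ + 1)))) :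
    ∀ ℓ : ℕ,
      b₂ (ℓ + 1)
        = (Λ₂⁻¹ * X₂ᵀ * (∑ j ∈ Finset.range (ℓ + 1), (S₁ * S₂) ^ j * (1 - S₁))) *ᵥ y
          + (Λ₂⁻¹ * X₂ᵀ * (S₁ * S₂) ^ ℓ * S₁ * X₂) *ᵥ b₂ 0 := by
  have key : ∀ ℓ, b₂ (ℓ + 1)
      = (Λ₂⁻¹ * X₂ᵀ * (1 - S₁)) *ᵥ y + (Λ₂⁻¹ * X₂ᵀ * S₁ * X₂) *ᵥ b₂ ℓ := by
    intro ℓ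
    rw [hrec₂, hrec₁, hS₁]
    simp only [Matrix.mulVec_sub, Matrix.mulVec_mulVec, Matrix.sub_mulVec,
      Matrix.mulVec_add, Matrix.mul_sub, Matrix.mul_one, Matrix.mul_assoc]
    abel
  intro ℓ
  induction ℓ with
  | zero =>
    simpa [Matrix.mul_assoc] using key 0
  | succ ℓ ih =>
    rw [key (ℓ + 1), ih]
    have hsum : (∑ j ∈ Finset.range (ℓ + 1 + 1), (S₁ * S₂) ^ j * (1 - S₁))
        = (1 - S₁) + S₁ * S₂ * (∑ j ∈ Finset.range (ℓ + 1), (S₁ * S₂) ^ j * (1 - S₁)) := by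
      rw [Finset.sum_range_succ']
      simp only [pow_zero, one_mul, pow_succ']
      rw [Finset.mul_sum]
      rw [add_comm]
      congr 1
      apply Finset.sum_congr rfl
      intro j _
      rw [Matrix.mul_assoc]
    have hA : Λ₂⁻¹ * X₂ᵀ * (∑ j ∈ Finset.range (ℓ + 1 + 1), (S₁ * S₂) ^ j * (1 - S₁))
        = Λ₂⁻¹ * X₂ᵀ * (1 - S₁)
          + (Λ₂⁻¹ * X₂ᵀ * S₁ * X₂) * (Λ₂⁻¹ * X₂ᵀ * (∑ j ∈ Finset.range (ℓ + 1), (S₁ * S₂) ^ j * (1 - S₁))) := by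
      rw [hsum, Matrix.mul_add]
      congr 1
      rw [hS₂]
      simp only [Matrix.mul_assoc]
    have hB : Λ₂⁻¹ * X₂ᵀ * (S₁ * S₂) ^ (ℓ + 1) * S₁ * X₂
        = (Λ₂⁻¹ * X₂ᵀ * S₁ * X₂) * (Λ₂⁻¹ * X₂ᵀ * (S₁ * S₂) ^ ℓ * S₁ * X₂) := by
      rw [pow_succ']
      rw [hS₂]
      simp only [Matrix.mul_assoc]
    rw [hA, hB]
    simp only [Matrix.mulVec_add, Matrix.add_mulVec, Matrix.mulVec_mulVec]
    abel
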